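/- There exists a universal constant C > 0 with the following property. Let ℓ > 0, let c ∈ ℝ³, let Q₁ be a cube with center c and side length ℓ, and let Q₂ ⊂ B_{10ℓ}(c) be a cube of side length in [ℓ/4, 4ℓ]. Then for every v ∈ L¹(B_{10ℓ}(c)): ∫_{Q₁} ∫_{Q₂} ∫_{[x₁,x₂]} |v(z)| dH¹(z) dx₂ dx₁ ≤ C·ℓ⁴ ∫_{B_{10ℓ}(c)} |v(z)| dz = C·ℓ⁷ ⨍_{B_{10ℓ}(c)} |v(z)| dz. -/

import Mathlib

open MeasureTheory Metric ENNReal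

noncomputable section

local notation "E3" => EuclideanSpace ℝ (Fin 3)

open Set

/-- The closed axis-parallel cube with center `c` and side length `l`. -/
def cube (c : E3) (l : ℝ) : Set E3 :=
  {x | ∀ i : Fin 3, |x i - c i| ≤ l / 2}

lemma measurableSet_cube (c : E3) (l : ℝ) : MeasurableSet (cube c l) := by
  have h : cube c l = ⋂ i : Fin 3, {x : E3 | |x i - c i| ≤ l / 2} := by
    ext x; simp [cube]
  rw [h]
  refine MeasurableSet.iInter fun i => ?_
  have hc : Continuous fun x : E3 => |x i - c i| := by fun_prop
  exact measurableSet_le hc.measurable measurable_const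

lemma volume_cube (c : E3) {l : ℝ} (hl : 0 ≤ l) :
    volume (cube c l) = ENNReal.ofReal l ^ 3 := by
  have e := EuclideanSpace.volume_preserving_symm_measurableEquiv_toLp (Fin 3)
  have hs : cube c l = (MeasurableEquiv.toLp 2 (Fin 3 → ℝ)).symm ⁻¹'
      (Set.univ.pi fun i => Icc (c i - l / 2) (c i + l / 2)) := by
    ext x
    simp only [cube, mem_setOf_eq, mem_preimage, mem_pi, mem_univ, forall_true_left, mem_Icc,
      abs_le]
    change _ ↔ ∀ i, c i - l / 2 ≤ x i ∧ x i ≤ c i + l / 2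
    refine forall_congr' fun i => ?_
    constructor <;> intro h <;> constructor <;> first | linarith [h.1, h.2] | skip
  rw [hs, e.measure_preimage (by measurability)]
  rw [volume_pi_pi]
  simp only [Real.volume_Icc]
  have : ∀ i : Fin 3, c i + l / 2 - (c i - l / 2) = l := fun i => by ring
  simp only [this, Finset.prod_const, Finset.card_univ, Fintype.card_fin]

lemma dist_le_of_mem_cube {c x : E3} {l : ℝ} (hx : x ∈ cube c l) (hl : 0 ≤ l) :
    dist x c ≤ l := by
  rw [EuclideanSpace.dist_eq]
  have h1 : ∑ i, dist (x i) (c i) ^ 2 ≤ (3 : ℝ) * (l / 2) ^ 2 := by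
    have : ∀ i : Fin 3, dist (x i) (c i) ^ 2 ≤ (l / 2) ^ 2 := by
      intro i
      have := hx i
      rw [Real.dist_eq]
      nlinarith [abs_nonneg (x i - c i)]
    calc ∑ i, dist (x i) (c i) ^ 2 ≤ ∑ _i : Fin 3, (l / 2) ^ 2 :=
          Finset.sum_le_sum fun i _ => this i
      _ = 3 * (l / 2) ^ 2 := by simp [Finset.sum_const]
  calc Real.sqrt (∑ i, dist (x i) (c i) ^ 2) ≤ Real.sqrt (l ^ 2) := by
        apply Real.sqrt_le_sqrt; nlinarith
    _ = l := Real.sqrt_sq hl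

lemma ball_subset_cube (c : E3) {r : ℝ} :
    ball c r ⊆ cube c (2 * r) := by
  intro x hx i
  have h1 : |x i - c i| ≤ dist x c := by
    rw [EuclideanSpace.dist_eq]
    rw [← Real.sqrt_sq (abs_nonneg (x i - c i))]
    apply Real.sqrt_le_sqrt
    rw [sq_abs]
    have : dist (x i) (c i) ^ 2 = (x i - c i) ^ 2 := by rw [Real.dist_eq, sq_abs]
    rw [← this]
    exact Finset.single_le_sum (f := fun j => dist (x j) (c j) ^ 2)
      (fun j _ => sq_nonneg _) (Finset.mem_univ i)
  have := mem_ball.1 hx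
  calc |x i - c i| ≤ dist x c := h1
    _ ≤ 2 * r / 2 := by linarith

lemma lintegral_segment_le (g : E3 → ℝ≥0∞) (hg : Measurable g) (x₁ x₂ : E3) :
    ∫⁻ z in segment ℝ x₁ x₂, g z ∂(μH[1]) ≤
      ENNReal.ofReal ‖x₂ - x₁‖ * ∫⁻ t in Icc (0:ℝ) 1, g (x₁ + t • (x₂ - x₁)) := by
  set L : ℝ → E3 := fun t => x₁ + t • (x₂ - x₁) with hLdef
  have hL : Measurable L := by
    apply Continuous.measurable
    fun_prop
  have hLip : LipschitzWith ‖x₂ - x₁‖₊ L := by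
    apply LipschitzWith.of_dist_le_mul
    intro s t
    have h1 : L s - L t = (s - t) • (x₂ - x₁) := by
      simp only [hLdef]
      module
    rw [dist_eq_norm, h1, norm_smul, Real.dist_eq, Real.norm_eq_abs]
    rw [mul_comm]
    rfl
  have key : (μH[1] : Measure E3).restrict (segment ℝ x₁ x₂) ≤
      (‖x₂ - x₁‖₊ : ℝ≥0∞) • Measure.map L (volume.restrict (Icc (0:ℝ) 1)) := by
    rw [Measure.le_iff]
    intro s hs
    rw [Measure.restrict_apply hs, Measure.smul_apply, Measure.map_apply hL hs,
      Measure.restrict_apply (hL hs), smul_eq_mul]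
    calc μH[1] (s ∩ segment ℝ x₁ x₂)
        ≤ μH[1] (L '' (L ⁻¹' s ∩ Icc 0 1)) := by
          apply measure_mono
          rintro z ⟨hzs, hzseg⟩
          rw [segment_eq_image' ℝ x₁ x₂] at hzseg
          obtain ⟨t, ht, rfl⟩ := hzseg
          exact ⟨t, ⟨hzs, ht⟩, rfl⟩
      _ ≤ (‖x₂ - x₁‖₊ : ℝ≥0∞) ^ (1:ℝ) * μH[1] (L ⁻¹' s ∩ Icc 0 1) :=
          hLip.hausdorffMeasure_image_le zero_le_one _
      _ = (‖x₂ - x₁‖₊ : ℝ≥0∞) * volume (L ⁻¹' s ∩ Icc 0 1) := by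
          rw [ENNReal.rpow_one, MeasureTheory.hausdorffMeasure_real]
  calc ∫⁻ z in segment ℝ x₁ x₂, g z ∂(μH[1])
      ≤ ∫⁻ z, g z ∂((‖x₂ - x₁‖₊ : ℝ≥0∞) • Measure.map L (volume.restrict (Icc (0:ℝ) 1))) :=
        lintegral_mono' key le_rfl
    _ = (‖x₂ - x₁‖₊ : ℝ≥0∞) * ∫⁻ z, g z ∂(Measure.map L (volume.restrict (Icc (0:ℝ) 1))) :=
        lintegral_smul_measure _ _
    _ = ENNReal.ofReal ‖x₂ - x₁‖ * ∫⁻ t in Icc (0:ℝ) 1, g (x₁ + t • (x₂ - x₁)) := by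
        rw [lintegral_map hg hL, ofReal_norm, enorm_eq_nnnorm]

lemma lintegral_comp_affine (g : E3 → ℝ≥0∞) (hg : Measurable g) (b : E3) {a : ℝ} (ha : a ≠ 0) :
    ∫⁻ y, g (b + a • y) = ENNReal.ofReal |(a ^ 3)⁻¹| * ∫⁻ y, g y := by
  have h1 : Measurable fun z : E3 => g (b + z) := by
    apply hg.comp
    fun_prop
  have hmap := Measure.map_addHaar_smul (volume : Measure E3) ha
  rw [finrank_euclideanSpace_fin] at hmap
  calc ∫⁻ y, g (b + a • y)
      = ∫⁻ z, g (b + z) ∂(Measure.map (a • ·) volume) := by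
        rw [lintegral_map h1 (by fun_prop)]
    _ = ENNReal.ofReal |(a ^ 3)⁻¹| * ∫⁻ z, g (b + z) := by
        rw [hmap, lintegral_smul_measure, smul_eq_mul]
    _ = ENNReal.ofReal |(a ^ 3)⁻¹| * ∫⁻ y, g y := by
        rw [lintegral_add_left_eq_self (fun z => g z) b]

lemma lintegral_comp_affine_le (g : E3 → ℝ≥0∞) (hg : Measurable g) (b : E3) {a : ℝ}
    (h1 : 2⁻¹ ≤ a) (h2 : a ≤ 1) :
    ∫⁻ y, g (b + a • y) ≤ 8 * ∫⁻ y, g y := by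
  have ha : a ≠ 0 := by positivity
  rw [lintegral_comp_affine g hg b ha]
  apply mul_le_mul_left
  have h3 : |(a ^ 3)⁻¹| = (a ^ 3)⁻¹ := abs_of_pos (by positivity)
  have h4 : (a ^ 3)⁻¹ ≤ 8 := by
    rw [inv_le_comm₀ (by positivity) (by norm_num)]
    have h5 : ((2:ℝ)⁻¹) ^ 3 ≤ a ^ 3 := pow_le_pow_left₀ (by norm_num) h1 3
    norm_num at h5
    linarith
  calc ENNReal.ofReal |(a ^ 3)⁻¹| ≤ ENNReal.ofReal 8 := by
        apply ENNReal.ofReal_le_ofReal; rw [h3]; exact h4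
    _ = 8 := by norm_num

lemma exists_majorant {B : Set E3} (hB : MeasurableSet B) (v : E3 → ℝ)
    (hv : AEStronglyMeasurable v (volume.restrict B)) (hv0 : ∀ x ∉ B, v x = 0) :
    ∃ g : E3 → ℝ≥0∞, Measurable g ∧ (∀ z, ENNReal.ofReal |v z| ≤ g z) ∧
      ∫⁻ z, g z = ∫⁻ z in B, ENNReal.ofReal |v z| := by
  set w : E3 → ℝ := B.indicator (hv.mk v) with hwdef
  have hw : Measurable w := (hv.stronglyMeasurable_mk).measurable.indicator hB
  have hvw : ∀ᵐ z ∂(volume : Measure E3), v z = w z := by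
    have h1 : ∀ᵐ z ∂(volume : Measure E3), z ∈ B → v z = hv.mk v z :=
      (ae_restrict_iff' hB).1 hv.ae_eq_mk
    filter_upwards [h1] with z hz
    by_cases hzB : z ∈ B
    · rw [hwdef, Set.indicator_of_mem hzB]; exact hz hzB
    · rw [hwdef, Set.indicator_of_notMem hzB]; exact hv0 z hzB
  set N := toMeasurable (volume : Measure E3) {z | v z ≠ w z} with hNdef
  have hNnull : volume N = 0 := by
    rw [hNdef, measure_toMeasurable]
    exact hvw
  have hwm : Measurable fun z => ENNReal.ofReal |w z| :=
    ENNReal.measurable_ofReal.comp hw.abs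
  refine ⟨fun z => N.indicator (fun _ => ∞) z + ENNReal.ofReal |w z|, ?_, ?_, ?_⟩
  · exact ((measurable_const.indicator (measurableSet_toMeasurable _ _))).add hwm
  · intro z
    by_cases hzN : z ∈ N
    · simp [Set.indicator_of_mem hzN]
    · show ENNReal.ofReal |v z| ≤ N.indicator (fun _ => ∞) z + ENNReal.ofReal |w z|
      rw [Set.indicator_of_notMem hzN, zero_add]
      have hz : v z = w z := by
        by_contra h
        exact hzN (subset_toMeasurable _ _ h)
      rw [hz]
  · have hae : (fun z => N.indicator (fun _ => (∞ : ℝ≥0∞)) z + ENNReal.ofReal |w z|)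
        =ᵐ[(volume : Measure E3)] fun z => ENNReal.ofReal |w z| := by
      have hN' : ∀ᵐ z ∂(volume : Measure E3), z ∉ N := by
        rw [ae_iff]
        simpa using hNnull
      filter_upwards [hN'] with z hz
      rw [Set.indicator_of_notMem hz, zero_add]
    rw [lintegral_congr_ae hae]
    have hind : (fun z => ENNReal.ofReal |w z|)
        = B.indicator fun z => ENNReal.ofReal |hv.mk v z| := by
      funext z
      by_cases hzB : z ∈ B <;>
        simp [hwdef, Set.indicator_of_mem, Set.indicator_of_notMem, hzB]
    rw [hind, lintegral_indicator hB]
    exact lintegral_congr_ae (hv.ae_eq_mk.symm.mono fun z hz => by simp only []; rw [hz])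

/-- **Scaled version of Lemma 3.8 (a).** For a cube `Q₁` of side `ℓ` centered at `c`
and a comparable cube `Q₂ ⊂ B_{10ℓ}(c)`, the iterated segment integral of `|v|` is
bounded by `C ℓ⁴ ∫_{B_{10ℓ}(c)} |v| = C ℓ⁷ ⨍_{B_{10ℓ}(c)} |v|`. -/
theorem segment_integral_bound_scaled :
    ∃ C : ℝ, 0 < C ∧
      ∀ (ℓ : ℝ), 0 < ℓ → ∀ (c : E3) (c₂ : E3) (l₂ : ℝ),
        ℓ / 4 ≤ l₂ → l₂ ≤ 4 * ℓ → cube c₂ l₂ ⊆ ball c (10 * ℓ) →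
        ∀ v : E3 → ℝ, IntegrableOn v (ball c (10 * ℓ)) →
          (∀ x ∉ ball c (10 * ℓ), v x = 0) →
          (∫⁻ x₁ in cube c ℓ, ∫⁻ x₂ in cube c₂ l₂,
              ∫⁻ z in segment ℝ x₁ x₂, ENNReal.ofReal |v z| ∂(μH[1])
            ≤ ENNReal.ofReal (C * ℓ ^ 4) *
                ∫⁻ z in ball c (10 * ℓ), ENNReal.ofReal |v z|) ∧
          (∫⁻ x₁ in cube c ℓ, ∫⁻ x₂ in cube c₂ l₂,
              ∫⁻ z in segment ℝ x₁ x₂, ENNReal.ofReal |v z| ∂(μH[1])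
            ≤ ENNReal.ofReal (C * ℓ ^ 7) *
                ((volume (ball c (10 * ℓ)))⁻¹ *
                  ∫⁻ z in ball c (10 * ℓ), ENNReal.ofReal |v z|)) := by
  refine ⟨83200000, by norm_num, ?_⟩
  intro ℓ hℓ c c₂ l₂ hl21 hl22 hQ₂B v hv hv0
  obtain ⟨g, hg, hvg, hgI⟩ :=
    exists_majorant measurableSet_ball v hv.aestronglyMeasurable hv0
  set I : ℝ≥0∞ := ∫⁻ z, g z with hIdef
  have hl₂0 : 0 < l₂ := lt_of_lt_of_le (by positivity) hl21
  have hQ₁m := measurableSet_cube c ℓ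
  have hQ₂m := measurableSet_cube c₂ l₂
  -- key scaling bounds
  have key₁ : ∀ t ∈ Icc (0:ℝ) 2⁻¹, ∀ x₂ : E3,
      ∫⁻ x₁, g (x₁ + t • (x₂ - x₁)) ≤ 8 * I := by
    rintro t ⟨ht0, ht1⟩ x₂
    have hre : (fun x₁ : E3 => g (x₁ + t • (x₂ - x₁)))
        = fun x₁ => g (t • x₂ + (1 - t) • x₁) := by
      funext x₁; congr 1; module
    rw [hre]
    exact lintegral_comp_affine_le g hg _ (by linarith) (by linarith)
  have key₂ : ∀ t ∈ Ioc (2⁻¹:ℝ) 1, ∀ x₁ : E3,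
      ∫⁻ x₂, g (x₁ + t • (x₂ - x₁)) ≤ 8 * I := by
    rintro t ⟨ht0, ht1⟩ x₁
    have hre : (fun x₂ : E3 => g (x₁ + t • (x₂ - x₁)))
        = fun x₂ => g ((1 - t) • x₁ + t • x₂) := by
      funext x₂; congr 1; module
    rw [hre]
    exact lintegral_comp_affine_le g hg _ ht0.le ht1
  -- measurability facts
  have mF2 : ∀ x₁ : E3, Measurable fun p : E3 × ℝ => g (x₁ + p.2 • (p.1 - x₁)) :=
    fun x₁ => hg.comp (Continuous.measurable (by fun_prop))
  have mF3 : Measurable fun p : (E3 × ℝ) × E3 => g (p.1.1 + p.1.2 • (p.2 - p.1.1)) :=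
    hg.comp (Continuous.measurable (by fun_prop))
  have mFt : ∀ t : ℝ, Measurable fun p : E3 × E3 => g (p.1 + t • (p.2 - p.1)) :=
    fun t => hg.comp (Continuous.measurable (by fun_prop))
  have mF2' : Measurable fun p : E3 × E3 => g (p.2 + ((1:ℝ)/2) • (p.1 - p.2)) :=
    hg.comp (Continuous.measurable (by fun_prop))
  have mH : Measurable fun q : E3 × ℝ => ∫⁻ x₂ in cube c₂ l₂, g (q.1 + q.2 • (x₂ - q.1)) := by
    have h : Measurable (Function.uncurry
        fun (q : E3 × ℝ) (x₂ : E3) => g (q.1 + q.2 • (x₂ - q.1))) := mF3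
    exact h.lintegral_prod_right
  -- distance bound
  have hdistb : ∀ x₁ ∈ cube c ℓ, ∀ x₂ ∈ cube c₂ l₂, ‖x₂ - x₁‖ ≤ 20 * ℓ := by
    intro x₁ h1 x₂ h2
    have d1 : dist x₁ c ≤ ℓ := dist_le_of_mem_cube h1 hℓ.le
    have d2 : dist x₂ c < 10 * ℓ := mem_ball.1 (hQ₂B h2)
    calc ‖x₂ - x₁‖ = dist x₂ x₁ := (dist_eq_norm x₂ x₁).symm
      _ ≤ dist x₂ c + dist c x₁ := dist_triangle x₂ c x₁
      _ ≤ 20 * ℓ := by rw [dist_comm c x₁]; linarith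
  -- Step 1
  have step1 : (∫⁻ x₁ in cube c ℓ, ∫⁻ x₂ in cube c₂ l₂,
        ∫⁻ z in segment ℝ x₁ x₂, ENNReal.ofReal |v z| ∂(μH[1]))
      ≤ ∫⁻ x₁ in cube c ℓ, ∫⁻ x₂ in cube c₂ l₂,
          ENNReal.ofReal (20 * ℓ) * ∫⁻ t in Icc (0:ℝ) 1, g (x₁ + t • (x₂ - x₁)) := by
    refine setLIntegral_mono' hQ₁m fun x₁ hx₁ => ?_
    refine setLIntegral_mono' hQ₂m fun x₂ hx₂ => ?_
    calc ∫⁻ z in segment ℝ x₁ x₂, ENNReal.ofReal |v z| ∂(μH[1])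
        ≤ ∫⁻ z in segment ℝ x₁ x₂, g z ∂(μH[1]) := lintegral_mono fun z => hvg z
      _ ≤ ENNReal.ofReal ‖x₂ - x₁‖ * ∫⁻ t in Icc (0:ℝ) 1, g (x₁ + t • (x₂ - x₁)) :=
          lintegral_segment_le g hg x₁ x₂
      _ ≤ ENNReal.ofReal (20 * ℓ) * ∫⁻ t in Icc (0:ℝ) 1, g (x₁ + t • (x₂ - x₁)) :=
          mul_le_mul_left (ENNReal.ofReal_le_ofReal (hdistb _ hx₁ _ hx₂)) _
  -- Step 2: pull constant out
  have step2 : (∫⁻ x₁ in cube c ℓ, ∫⁻ x₂ in cube c₂ l₂,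
        ENNReal.ofReal (20 * ℓ) * ∫⁻ t in Icc (0:ℝ) 1, g (x₁ + t • (x₂ - x₁)))
      = ENNReal.ofReal (20 * ℓ) * ∫⁻ x₁ in cube c ℓ, ∫⁻ x₂ in cube c₂ l₂,
          ∫⁻ t in Icc (0:ℝ) 1, g (x₁ + t • (x₂ - x₁)) := by
    simp_rw [lintegral_const_mul' _ _ ENNReal.ofReal_ne_top]
  -- split the t-integral
  have hsplit : ∀ x₁ x₂ : E3, (∫⁻ t in Icc (0:ℝ) 1, g (x₁ + t • (x₂ - x₁)))
      = (∫⁻ t in Icc (0:ℝ) 2⁻¹, g (x₁ + t • (x₂ - x₁)))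
        + ∫⁻ t in Ioc (2⁻¹:ℝ) 1, g (x₁ + t • (x₂ - x₁)) := by
    intro x₁ x₂
    rw [← Set.Icc_union_Ioc_eq_Icc (by norm_num : (0:ℝ) ≤ 2⁻¹) (by norm_num : (2⁻¹:ℝ) ≤ 1)]
    exact lintegral_union measurableSet_Ioc ((Set.Iic_disjoint_Ioc le_rfl).mono Set.Icc_subset_Iic_self le_rfl)
  -- measurable inner integrals
  have mInner : ∀ (s : Set ℝ) (x₁ : E3),
      Measurable fun x₂ : E3 => ∫⁻ t in s, g (x₁ + t • (x₂ - x₁)) := by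
    intro s x₁
    exact Measurable.lintegral_prod_right (f := fun x₂ t => g (x₁ + t • (x₂ - x₁)))
      (mF2 x₁)
  have mOuter : ∀ (s : Set ℝ),
      Measurable fun x₁ : E3 => ∫⁻ x₂ in cube c₂ l₂, ∫⁻ t in s, g (x₁ + t • (x₂ - x₁)) := by
    intro s
    apply Measurable.lintegral_prod_right
      (f := fun x₁ x₂ => ∫⁻ t in s, g (x₁ + t • (x₂ - x₁)))
    apply Measurable.lintegral_prod_right (f := fun p : E3 × E3 => fun t => g (p.1 + t • (p.2 - p.1)))
    exact hg.comp (Continuous.measurable (by fun_prop))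
  -- Step 3: split
  have step3 : (∫⁻ x₁ in cube c ℓ, ∫⁻ x₂ in cube c₂ l₂,
        ∫⁻ t in Icc (0:ℝ) 1, g (x₁ + t • (x₂ - x₁)))
      = (∫⁻ x₁ in cube c ℓ, ∫⁻ x₂ in cube c₂ l₂,
          ∫⁻ t in Icc (0:ℝ) 2⁻¹, g (x₁ + t • (x₂ - x₁)))
        + ∫⁻ x₁ in cube c ℓ, ∫⁻ x₂ in cube c₂ l₂,
          ∫⁻ t in Ioc (2⁻¹:ℝ) 1, g (x₁ + t • (x₂ - x₁)) := by
    have h1 : ∀ x₁ : E3, (∫⁻ x₂ in cube c₂ l₂, ∫⁻ t in Icc (0:ℝ) 1, g (x₁ + t • (x₂ - x₁)))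
        = (∫⁻ x₂ in cube c₂ l₂, ∫⁻ t in Icc (0:ℝ) 2⁻¹, g (x₁ + t • (x₂ - x₁)))
          + ∫⁻ x₂ in cube c₂ l₂, ∫⁻ t in Ioc (2⁻¹:ℝ) 1, g (x₁ + t • (x₂ - x₁)) := by
      intro x₁
      simp_rw [hsplit x₁]
      exact lintegral_add_left (mInner _ x₁) _
    simp_rw [h1]
    exact lintegral_add_left (mOuter _) _
  -- Step 4: bound first piece
  have step4 : (∫⁻ x₁ in cube c ℓ, ∫⁻ x₂ in cube c₂ l₂,
        ∫⁻ t in Icc (0:ℝ) 2⁻¹, g (x₁ + t • (x₂ - x₁)))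
      ≤ 8 * I * volume (cube c₂ l₂) := by
    have sw1 : ∀ x₁ : E3, (∫⁻ x₂ in cube c₂ l₂, ∫⁻ t in Icc (0:ℝ) 2⁻¹, g (x₁ + t • (x₂ - x₁)))
        = ∫⁻ t in Icc (0:ℝ) 2⁻¹, ∫⁻ x₂ in cube c₂ l₂, g (x₁ + t • (x₂ - x₁)) :=
      fun x₁ => lintegral_lintegral_swap (mF2 x₁).aemeasurable
    simp_rw [sw1]
    rw [lintegral_lintegral_swap mH.aemeasurable]
    calc (∫⁻ t in Icc (0:ℝ) 2⁻¹, ∫⁻ x₁ in cube c ℓ, ∫⁻ x₂ in cube c₂ l₂,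
            g (x₁ + t • (x₂ - x₁)))
        ≤ ∫⁻ _t in Icc (0:ℝ) 2⁻¹, 8 * I * volume (cube c₂ l₂) := by
          refine setLIntegral_mono' measurableSet_Icc fun t ht => ?_
          rw [lintegral_lintegral_swap (mFt t).aemeasurable]
          calc (∫⁻ x₂ in cube c₂ l₂, ∫⁻ x₁ in cube c ℓ, g (x₁ + t • (x₂ - x₁)))
              ≤ ∫⁻ _x₂ in cube c₂ l₂, 8 * I := by
                refine setLIntegral_mono' hQ₂m fun x₂ _ => ?_
                exact le_trans (setLIntegral_le_lintegral _ _) (key₁ t ht x₂)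
            _ = 8 * I * volume (cube c₂ l₂) := setLIntegral_const _ _
      _ = 8 * I * volume (cube c₂ l₂) * volume (Icc (0:ℝ) 2⁻¹) := setLIntegral_const _ _
      _ ≤ 8 * I * volume (cube c₂ l₂) * 1 := by
          apply mul_le_mul_right
          rw [Real.volume_Icc]
          exact ENNReal.ofReal_le_one.mpr (by norm_num)
      _ = 8 * I * volume (cube c₂ l₂) := mul_one _
  -- Step 5: bound second piece
  have step5 : (∫⁻ x₁ in cube c ℓ, ∫⁻ x₂ in cube c₂ l₂,
        ∫⁻ t in Ioc (2⁻¹:ℝ) 1, g (x₁ + t • (x₂ - x₁)))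
      ≤ 8 * I * volume (cube c ℓ) := by
    calc (∫⁻ x₁ in cube c ℓ, ∫⁻ x₂ in cube c₂ l₂,
            ∫⁻ t in Ioc (2⁻¹:ℝ) 1, g (x₁ + t • (x₂ - x₁)))
        ≤ ∫⁻ _x₁ in cube c ℓ, 8 * I := by
          refine setLIntegral_mono' hQ₁m fun x₁ _ => ?_
          rw [lintegral_lintegral_swap (mF2 x₁).aemeasurable]
          calc (∫⁻ t in Ioc (2⁻¹:ℝ) 1, ∫⁻ x₂ in cube c₂ l₂, g (x₁ + t • (x₂ - x₁)))
              ≤ ∫⁻ _t in Ioc (2⁻¹:ℝ) 1, 8 * I := by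
                refine setLIntegral_mono' measurableSet_Ioc fun t ht => ?_
                exact le_trans (setLIntegral_le_lintegral _ _) (key₂ t ht x₁)
            _ = 8 * I * volume (Ioc (2⁻¹:ℝ) 1) := setLIntegral_const _ _
            _ ≤ 8 * I * 1 := by
                apply mul_le_mul_right
                rw [Real.volume_Ioc]
                exact ENNReal.ofReal_le_one.mpr (by norm_num)
            _ = 8 * I := mul_one _
      _ = 8 * I * volume (cube c ℓ) := setLIntegral_const _ _
  -- volume bounds
  have hvQ₁ : volume (cube c ℓ) = ENNReal.ofReal (ℓ ^ 3) := by
    rw [volume_cube c hℓ.le, ← ENNReal.ofReal_pow hℓ.le]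
  have hvQ₂ : volume (cube c₂ l₂) ≤ ENNReal.ofReal (64 * ℓ ^ 3) := by
    rw [volume_cube c₂ hl₂0.le, ← ENNReal.ofReal_pow hl₂0.le]
    apply ENNReal.ofReal_le_ofReal
    nlinarith [pow_le_pow_left₀ hl₂0.le hl22 3]
  -- main bound
  have main : (∫⁻ x₁ in cube c ℓ, ∫⁻ x₂ in cube c₂ l₂,
        ∫⁻ z in segment ℝ x₁ x₂, ENNReal.ofReal |v z| ∂(μH[1]))
      ≤ ENNReal.ofReal (10400 * ℓ ^ 4) * I := by
    calc (∫⁻ x₁ in cube c ℓ, ∫⁻ x₂ in cube c₂ l₂,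
            ∫⁻ z in segment ℝ x₁ x₂, ENNReal.ofReal |v z| ∂(μH[1]))
        ≤ _ := step1
      _ = ENNReal.ofReal (20 * ℓ) * ∫⁻ x₁ in cube c ℓ, ∫⁻ x₂ in cube c₂ l₂,
            ∫⁻ t in Icc (0:ℝ) 1, g (x₁ + t • (x₂ - x₁)) := step2
      _ ≤ ENNReal.ofReal (20 * ℓ) * (8 * I * volume (cube c₂ l₂) + 8 * I * volume (cube c ℓ)) := by
          apply mul_le_mul_right
          rw [step3]
          exact add_le_add step4 step5
      _ ≤ ENNReal.ofReal (20 * ℓ) *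
            (8 * I * ENNReal.ofReal (64 * ℓ ^ 3) + 8 * I * ENNReal.ofReal (ℓ ^ 3)) := by
          apply mul_le_mul_right
          exact add_le_add (mul_le_mul_right hvQ₂ _) (mul_le_mul_right hvQ₁.le _)
      _ = ENNReal.ofReal (20 * ℓ) * (8 * (ENNReal.ofReal (64 * ℓ ^ 3) + ENNReal.ofReal (ℓ ^ 3))) * I := by
          ring
      _ = ENNReal.ofReal (10400 * ℓ ^ 4) * I := by
          rw [show (8:ℝ≥0∞) = ENNReal.ofReal 8 from by norm_num]
          rw [← ENNReal.ofReal_add (by positivity) (by positivity),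
            ← ENNReal.ofReal_mul (by norm_num),
            ← ENNReal.ofReal_mul (by positivity)]
          congr 2
          ring
  rw [hgI] at main
  constructor
  · refine le_trans main (mul_le_mul_left (ENNReal.ofReal_le_ofReal ?_) _)
    nlinarith [pow_nonneg hℓ.le 4]
  · -- second form
    have hvB : volume (ball c (10 * ℓ)) ≤ ENNReal.ofReal (8000 * ℓ ^ 3) := by
      calc volume (ball c (10 * ℓ)) ≤ volume (cube c (2 * (10 * ℓ))) :=
            measure_mono (ball_subset_cube c)
        _ = ENNReal.ofReal (2 * (10 * ℓ)) ^ 3 := volume_cube c (by positivity)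
        _ = ENNReal.ofReal (8000 * ℓ ^ 3) := by
            rw [← ENNReal.ofReal_pow (by positivity)]
            congr 1
            ring
    have h80 : ENNReal.ofReal (8000 * ℓ ^ 3) ≠ 0 :=
      (ENNReal.ofReal_pos.mpr (by positivity)).ne'
    have h8t : ENNReal.ofReal (8000 * ℓ ^ 3) ≠ ∞ := ENNReal.ofReal_ne_top
    have hinv : (ENNReal.ofReal (8000 * ℓ ^ 3))⁻¹ ≤ (volume (ball c (10 * ℓ)))⁻¹ :=
      ENNReal.inv_le_inv' hvB
    refine le_trans main ?_
    calc ENNReal.ofReal (10400 * ℓ ^ 4) * (∫⁻ z in ball c (10 * ℓ), ENNReal.ofReal |v z|)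
        = ENNReal.ofReal (83200000 * ℓ ^ 7) *
            ((ENNReal.ofReal (8000 * ℓ ^ 3))⁻¹ *
              ∫⁻ z in ball c (10 * ℓ), ENNReal.ofReal |v z|) := by
          rw [show ENNReal.ofReal (83200000 * ℓ ^ 7)
              = ENNReal.ofReal (10400 * ℓ ^ 4) * ENNReal.ofReal (8000 * ℓ ^ 3) from by
            rw [← ENNReal.ofReal_mul (by positivity)]; congr 1; ring]
          rw [mul_assoc, ← mul_assoc (ENNReal.ofReal (8000 * ℓ ^ 3)),
            ENNReal.mul_inv_cancel h80 h8t, one_mul]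
      _ ≤ ENNReal.ofReal (83200000 * ℓ ^ 7) *
            ((volume (ball c (10 * ℓ)))⁻¹ * ∫⁻ z in ball c (10 * ℓ), ENNReal.ofReal |v z|) :=
          mul_le_mul_right (mul_le_mul_left hinv _) _
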